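/- Discrete Schwarz reflection: let F : {black squares of the upper half plane lattice} → ℂ be discrete holomorphic on the discrete upper half plane ℍ^δ (i.e. [∂̄^δ F](v) = 0 for every white square v of ℍ^δ), with Im F(u) = 0 for every black square u centered on the real axis. Define F_ℂ(u) = F(u) for u ∈ ℍ^δ and F_ℂ(u) = conj(F(ū)) for u in the lower half plane, where ū is the square symmetric to u with respect to the real axis. Then F_ℂ is discrete holomorphic on the whole plane lattice ℂ^δ. -/

import Mathlib

open Complex ComplexConjugate

/-- λ = e^{iπ/4} -/
noncomputable def lam : ℂ := Complex.exp ((Real.pi : ℂ) * Complex.I / 4)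

/-- Black squares of the lattice ℂ^δ: centers `(nδ/√2, mδ/√2)` with `n, m` both even. -/
def IsBlack (δ : ℝ) (u : ℂ) : Prop :=
  ∃ n m : ℤ, Even n ∧ Even m ∧ u.re = n * (δ / Real.sqrt 2) ∧ u.im = m * (δ / Real.sqrt 2)

/-- White squares of the lattice ℂ^δ: centers `(nδ/√2, mδ/√2)` with `n, m` both odd. -/
def IsWhite (δ : ℝ) (v : ℂ) : Prop :=
  ∃ n m : ℤ, Odd n ∧ Odd m ∧ v.re = n * (δ / Real.sqrt 2) ∧ v.im = m * (δ / Real.sqrt 2)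

/-- The discrete ∂̄-operator: for a function on black squares,
`[∂̄^δ F](v) = (1/2)[(F(v+δλ) − F(v−δλ))/(2δλ̄) + (F(v+δλ̄) − F(v−δλ̄))/(2δλ)]`. -/
noncomputable def dbar (δ : ℝ) (F : ℂ → ℂ) (v : ℂ) : ℂ :=
  (1 / 2) * ((F (v + (δ : ℂ) * lam) - F (v - (δ : ℂ) * lam)) / (2 * (δ : ℂ) * conj lam)
    + (F (v + (δ : ℂ) * conj lam) - F (v - (δ : ℂ) * conj lam)) / (2 * (δ : ℂ) * lam))

lemma lam_eq : lam = Complex.ofReal (Real.sqrt 2 / 2) + Complex.ofReal (Real.sqrt 2 / 2) * Complex.I := by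
  have h : (Real.pi : ℂ) * Complex.I / 4 = ((Real.pi/4 : ℝ) : ℂ) * Complex.I := by push_cast; ring
  rw [lam, h, Complex.exp_mul_I, ← Complex.ofReal_cos, ← Complex.ofReal_sin]
  simp [Real.cos_pi_div_four, Real.sin_pi_div_four]

lemma dlam (δ : ℝ) : ((δ:ℂ) * lam) = Complex.ofReal (δ / Real.sqrt 2) * (1 + Complex.I) := by
  have h2 : Real.sqrt 2 * Real.sqrt 2 = 2 := Real.mul_self_sqrt (by norm_num)
  have hne : Real.sqrt 2 ≠ 0 := by positivity
  have hc : (δ / Real.sqrt 2 : ℝ) = δ * (Real.sqrt 2 / 2) := by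
    field_simp
    linear_combination (-δ) * h2
  rw [lam_eq, hc]
  push_cast
  ring

lemma dlamc (δ : ℝ) : ((δ:ℂ) * (starRingEnd ℂ) lam) = Complex.ofReal (δ / Real.sqrt 2) * (1 - Complex.I) := by
  have := congrArg (starRingEnd ℂ) (dlam δ)
  simp only [map_mul, Complex.conj_ofReal, map_add, map_one, Complex.conj_I] at this
  rw [this]; ring

/-- Discrete Schwarz reflection principle: if `F` is discrete holomorphic on the discrete upper
half plane (i.e. `[∂̄^δ F](v) = 0` at every white square with positive imaginary part) and
`Im F(u) = 0` at every black square on the real axis, then the reflected extension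
`F_ℂ(u) = F(u)` for `Im u ≥ 0`, `F_ℂ(u) = conj(F(ū))` otherwise, is discrete holomorphic at
every white square of the whole plane. -/
theorem stmt6 (δ : ℝ) (hδ : 0 < δ) (F : ℂ → ℂ)
    (hhol : ∀ v : ℂ, IsWhite δ v → 0 < v.im → dbar δ F v = 0)
    (hreal : ∀ u : ℂ, IsBlack δ u → u.im = 0 → (F u).im = 0) :
    ∀ v : ℂ, IsWhite δ v →
      dbar δ (fun u => if 0 ≤ u.im then F u else conj (F (conj u))) v = 0 := by
  intro v hv
  obtain ⟨n, m, hn, hm, hvre, hvim⟩ := hv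
  set c : ℝ := δ / Real.sqrt 2 with hc
  have hc0 : 0 < c := div_pos hδ (by positivity)
  -- coordinates of the four neighbours
  have hre1 : (v + (δ:ℂ) * lam).re = (n + 1) * c := by
    rw [dlam]; simp [hvre]; push_cast; ring
  have him1 : (v + (δ:ℂ) * lam).im = (m + 1) * c := by
    rw [dlam]; simp [hvim]; push_cast; ring
  have hre2 : (v - (δ:ℂ) * lam).re = (n - 1) * c := by
    rw [dlam]; simp [hvre]; push_cast; ring
  have him2 : (v - (δ:ℂ) * lam).im = (m - 1) * c := by
    rw [dlam]; simp [hvim]; push_cast; ring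
  have hre3 : (v + (δ:ℂ) * conj lam).re = (n + 1) * c := by
    rw [dlamc]; simp [hvre]; push_cast; ring
  have him3 : (v + (δ:ℂ) * conj lam).im = (m - 1) * c := by
    rw [dlamc]; simp [hvim]; push_cast; ring
  have hre4 : (v - (δ:ℂ) * conj lam).re = (n - 1) * c := by
    rw [dlamc]; simp [hvre]; push_cast; ring
  have him4 : (v - (δ:ℂ) * conj lam).im = (m + 1) * c := by
    rw [dlamc]; simp [hvim]; push_cast; ring
  have hb1 : IsBlack δ (v + (δ:ℂ) * lam) := ⟨n+1, m+1, hn.add_one, hm.add_one, by exact_mod_cast hre1, by exact_mod_cast him1⟩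
  have hb2 : IsBlack δ (v - (δ:ℂ) * lam) := ⟨n-1, m-1, hn.sub_odd odd_one, hm.sub_odd odd_one, by exact_mod_cast hre2, by exact_mod_cast him2⟩
  have hb3 : IsBlack δ (v + (δ:ℂ) * conj lam) := ⟨n+1, m-1, hn.add_one, hm.sub_odd odd_one, by exact_mod_cast hre3, by exact_mod_cast him3⟩
  have hb4 : IsBlack δ (v - (δ:ℂ) * conj lam) := ⟨n-1, m+1, hn.sub_odd odd_one, hm.add_one, by exact_mod_cast hre4, by exact_mod_cast him4⟩
  have hmne : m ≠ 0 := by rintro rfl; exact (Int.not_odd_iff_even.mpr Even.zero) hm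
  rcases lt_or_gt_of_ne hmne with hneg | hpos
  · -- v in the lower half plane
    have hm1 : (m:ℝ) ≤ -1 := by have : m ≤ -1 := by omega
                                exact_mod_cast this
    have hkey : ∀ u : ℂ, IsBlack δ u → u.im ≤ 0 →
        (if 0 ≤ u.im then F u else conj (F (conj u))) = conj (F (conj u)) := by
      intro u hb hle
      by_cases h : 0 ≤ u.im
      · have h0 : u.im = 0 := le_antisymm hle h
        have hcu : conj u = u := Complex.conj_eq_iff_im.mpr h0
        rw [if_pos h, hcu]
        exact (Complex.conj_eq_iff_im.mpr (hreal u hb h0)).symm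
      · rw [if_neg h]
    have hi1 : (v + (δ:ℂ)*lam).im ≤ 0 := by rw [him1]; nlinarith
    have hi2 : (v - (δ:ℂ)*lam).im ≤ 0 := by rw [him2]; nlinarith
    have hi3 : (v + (δ:ℂ)*conj lam).im ≤ 0 := by rw [him3]; nlinarith
    have hi4 : (v - (δ:ℂ)*conj lam).im ≤ 0 := by rw [him4]; nlinarith
    set w : ℂ := conj v with hw
    have hwwhite : IsWhite δ w := ⟨n, -m, hn, hm.neg, by simp [hw, hvre]; exact Or.inl hc, by rw [hw]; simp only [Complex.conj_im, hvim]; push_cast; ring⟩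
    have hwpos : 0 < w.im := by
      simp only [hw, Complex.conj_im, hvim]
      nlinarith
    have h0 := hhol w hwwhite hwpos
    have hcj1 : conj (v + (δ:ℂ)*lam) = w + (δ:ℂ)*conj lam := by
      simp [hw, map_add, map_mul, Complex.conj_ofReal]
    have hcj2 : conj (v - (δ:ℂ)*lam) = w - (δ:ℂ)*conj lam := by
      simp [hw, map_sub, map_mul, Complex.conj_ofReal]
    have hcj3 : conj (v + (δ:ℂ)*conj lam) = w + (δ:ℂ)*lam := by
      simp [hw, map_add, map_mul, Complex.conj_ofReal]
    have hcj4 : conj (v - (δ:ℂ)*conj lam) = w - (δ:ℂ)*lam := by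
      simp [hw, map_sub, map_mul, Complex.conj_ofReal]
    have : dbar δ (fun u => if 0 ≤ u.im then F u else conj (F (conj u))) v
        = conj (dbar δ F w) := by
      simp only [dbar]
      rw [hkey _ hb1 hi1, hkey _ hb2 hi2, hkey _ hb3 hi3, hkey _ hb4 hi4,
        hcj1, hcj2, hcj3, hcj4]
      simp only [map_mul, map_add, map_sub, map_div₀, map_one, map_ofNat,
        Complex.conj_conj, Complex.conj_ofReal]
      ring
    rw [this, h0, map_zero]
  · -- v in the upper half plane
    have hm1 : (1:ℝ) ≤ (m:ℝ) := by exact_mod_cast hpos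
    have hi1 : 0 ≤ (v + (δ:ℂ)*lam).im := by rw [him1]; nlinarith
    have hi2 : 0 ≤ (v - (δ:ℂ)*lam).im := by rw [him2]; nlinarith
    have hi3 : 0 ≤ (v + (δ:ℂ)*conj lam).im := by rw [him3]; nlinarith
    have hi4 : 0 ≤ (v - (δ:ℂ)*conj lam).im := by rw [him4]; nlinarith
    have hvpos : 0 < v.im := by rw [hvim]; nlinarith
    have h0 := hhol v ⟨n, m, hn, hm, hvre, hvim⟩ hvpos
    rw [dbar] at h0 ⊢
    simp only [if_pos hi1, if_pos hi2, if_pos hi3, if_pos hi4]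
    exact h0
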